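/- For t ∈ [0,1], define Y_t : [−1,1] → {+1,−1,0} by Y_t(z) = z/|z| if |z| ≥ t and Y_t(z) = 0 if |z| < t, with the convention z/|z| = 1 when z = 0. Then for all z₁, z₂ ∈ [−1,1], ∫₀¹ |Y_{√t}(z₁) − Y_{√t}(z₂)| dt ≤ |z₁ − z₂|·(|z₁| + |z₂|). -/

import Mathlib

/-- For `t ∈ [0,1]`, the indicator-type function `Y_t : [-1,1] → {+1,-1,0}`, with
`Y_t(z) = z/|z|` if `|z| ≥ t` (where `z/|z| = 1` when `z = 0`), and `Y_t(z) = 0` if `|z| < t`. -/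
noncomputable def Yind (t z : ℝ) : ℝ :=
  if t ≤ |z| then (if z = 0 then 1 else z / |z|) else 0

/-- Lemma of Atay–Liu: for any `z₁, z₂ ∈ [-1,1]`,
`∫₀¹ |Y_{√t}(z₁) − Y_{√t}(z₂)| dt ≤ |z₁ − z₂| (|z₁| + |z₂|)`. -/

noncomputable def sgnv (z : ℝ) : ℝ := if z = 0 then 1 else z / |z|

lemma sgnv_nonneg {z : ℝ} (h : 0 ≤ z) : sgnv z = 1 := by
  unfold sgnv
  rcases eq_or_lt_of_le h with h0 | h0
  · simp [← h0]
  · rw [if_neg (ne_of_gt h0), abs_of_pos h0, div_self (ne_of_gt h0)]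

lemma sgnv_neg {z : ℝ} (h : z < 0) : sgnv z = -1 := by
  unfold sgnv
  rw [if_neg (ne_of_lt h), abs_of_neg h]
  rw [div_neg, div_self (ne_of_lt h)]

lemma abs_sgnv (z : ℝ) : |sgnv z| = 1 := by
  rcases le_or_gt 0 z with h | h
  · rw [sgnv_nonneg h]; norm_num
  · rw [sgnv_neg h]; norm_num

lemma Yind_sqrt (z t : ℝ) :
    Yind (Real.sqrt t) z = if t ≤ z ^ 2 then sgnv z else 0 := by
  have h : Real.sqrt t ≤ |z| ↔ t ≤ z ^ 2 := by
    rw [← Real.sqrt_sq_eq_abs]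
    exact Real.sqrt_le_sqrt_iff (sq_nonneg z)
  unfold Yind sgnv
  simp [h]

lemma step_intervalIntegrable (a b c : ℝ) (u v : ℝ) :
    IntervalIntegrable (fun t => if t ≤ a then c else if t ≤ b then (1:ℝ) else 0)
      MeasureTheory.volume u v := by
  rw [intervalIntegrable_iff]
  apply MeasureTheory.Measure.integrableOn_of_bounded (M := |c| + 1)
  · exact (measure_Ioc_lt_top).ne
  · apply Measurable.aestronglyMeasurable
    apply Measurable.ite measurableSet_Iic measurable_const
    exact Measurable.ite measurableSet_Iic measurable_const measurable_const
  · filter_upwards with t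
    by_cases h1 : t ≤ a <;> by_cases h2 : t ≤ b <;>
      simp [h1, h2, Real.norm_eq_abs] <;> positivity

lemma integral_step (a b c : ℝ) (ha : 0 ≤ a) (hab : a ≤ b) (hb1 : b ≤ 1) :
    ∫ t in (0:ℝ)..1, (if t ≤ a then c else if t ≤ b then (1:ℝ) else 0)
      = c * a + (b - a) := by
  have h1 : ∫ t in (0:ℝ)..a, (if t ≤ a then c else if t ≤ b then (1:ℝ) else 0) = c * a := by
    rw [intervalIntegral.integral_congr (g := fun _ => c), intervalIntegral.integral_const, mul_comm]
    · simp
    · intro t ht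
      rw [Set.uIcc_of_le ha] at ht
      simp [ht.2]
  have h2 : ∫ t in a..b, (if t ≤ a then c else if t ≤ b then (1:ℝ) else 0) = b - a := by
    rw [intervalIntegral.integral_of_le hab,
      MeasureTheory.setIntegral_congr_fun measurableSet_Ioc
        (g := fun _ => (1:ℝ)) (by intro t ht; simp [not_le.mpr ht.1, ht.2])]
    simp [Real.volume_Ioc, ENNReal.toReal_ofReal (sub_nonneg.mpr hab), hab]
  have h3 : ∫ t in b..(1:ℝ), (if t ≤ a then c else if t ≤ b then (1:ℝ) else 0) = 0 := by
    rw [intervalIntegral.integral_of_le hb1,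
      MeasureTheory.setIntegral_congr_fun measurableSet_Ioc
        (g := fun _ => (0:ℝ)) ?_]
    · simp
    · intro t ht
      have h2 : ¬ t ≤ b := not_le.mpr ht.1
      have h1 : ¬ t ≤ a := fun h => h2 (h.trans hab)
      simp [h1, h2]
  rw [← intervalIntegral.integral_add_adjacent_intervals (a := (0:ℝ)) (b := a) (c := (1:ℝ))
      (step_intervalIntegrable a b c 0 a)
      ((step_intervalIntegrable a b c a b).trans (step_intervalIntegrable a b c b 1)),
    ← intervalIntegral.integral_add_adjacent_intervals (a := a) (b := b) (c := (1:ℝ))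
      (step_intervalIntegrable a b c a b) (step_intervalIntegrable a b c b 1),
    h1, h2, h3]
  ring

lemma aux_main (z₁ z₂ : ℝ) (h₁ : |z₁| ≤ 1) (h₂ : |z₂| ≤ 1) (hab : z₁ ^ 2 ≤ z₂ ^ 2) :
    ∫ t in (0:ℝ)..1, |Yind (Real.sqrt t) z₁ - Yind (Real.sqrt t) z₂| ≤
      |z₁ - z₂| * (|z₁| + |z₂|) := by
  have hb1 : z₂ ^ 2 ≤ 1 := by nlinarith [abs_nonneg z₂, sq_abs z₂]
  have heq : ∀ t : ℝ, |Yind (Real.sqrt t) z₁ - Yind (Real.sqrt t) z₂|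
      = (if t ≤ z₁ ^ 2 then |sgnv z₁ - sgnv z₂| else if t ≤ z₂ ^ 2 then (1:ℝ) else 0) := by
    intro t
    rw [Yind_sqrt, Yind_sqrt]
    by_cases hc1 : t ≤ z₁ ^ 2
    · simp [hc1, hc1.trans hab]
    · by_cases hc2 : t ≤ z₂ ^ 2
      · simp [hc1, hc2, abs_sgnv]
      · simp [hc1, hc2]
  simp only [heq]
  rw [integral_step _ _ _ (sq_nonneg z₁) hab hb1]
  have hgen : z₂ ^ 2 - z₁ ^ 2 ≤ |z₁ - z₂| * (|z₁| + |z₂|) := by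
    calc z₂ ^ 2 - z₁ ^ 2 ≤ |z₂ ^ 2 - z₁ ^ 2| := le_abs_self _
      _ = |z₂ - z₁| * |z₂ + z₁| := by rw [← abs_mul]; ring_nf
      _ ≤ |z₁ - z₂| * (|z₁| + |z₂|) := by
          rw [abs_sub_comm]
          exact mul_le_mul_of_nonneg_left
            ((abs_add_le _ _).trans (by rw [add_comm])) (abs_nonneg _)
  rcases le_or_gt 0 z₁ with hz1 | hz1 <;> rcases le_or_gt 0 z₂ with hz2 | hz2
  · rw [sgnv_nonneg hz1, sgnv_nonneg hz2]
    simpa using hgen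
  · rw [sgnv_nonneg hz1, sgnv_neg hz2, abs_of_nonneg hz1, abs_of_neg hz2,
      abs_of_pos (by linarith : (0:ℝ) < z₁ - z₂)]
    have : |(1:ℝ) - (-1)| = 2 := by norm_num
    rw [this]
    nlinarith [mul_nonneg hz1 (le_of_lt (neg_pos.mpr hz2))]
  · rw [sgnv_neg hz1, sgnv_nonneg hz2, abs_of_neg hz1, abs_of_nonneg hz2,
      abs_of_neg (by linarith : z₁ - z₂ < 0)]
    have : |(-1:ℝ) - 1| = 2 := by norm_num
    rw [this]
    nlinarith [mul_nonneg (le_of_lt (neg_pos.mpr hz1)) hz2]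
  · rw [sgnv_neg hz1, sgnv_neg hz2]
    simpa using hgen


theorem integral_Yind_le (z₁ z₂ : ℝ) (h₁ : z₁ ∈ Set.Icc (-1 : ℝ) 1)
    (h₂ : z₂ ∈ Set.Icc (-1 : ℝ) 1) :
    ∫ t in (0 : ℝ)..1, |Yind (Real.sqrt t) z₁ - Yind (Real.sqrt t) z₂| ≤
      |z₁ - z₂| * (|z₁| + |z₂|) := by
  have ha1 : |z₁| ≤ 1 := abs_le.mpr ⟨h₁.1, h₁.2⟩
  have ha2 : |z₂| ≤ 1 := abs_le.mpr ⟨h₂.1, h₂.2⟩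
  rcases le_total (z₁ ^ 2) (z₂ ^ 2) with h | h
  · exact aux_main z₁ z₂ ha1 ha2 h
  · have := aux_main z₂ z₁ ha2 ha1 h
    rw [abs_sub_comm z₂ z₁, add_comm (|z₂|)] at this
    refine le_trans (le_of_eq ?_) this
    apply intervalIntegral.integral_congr
    intro t _
    exact abs_sub_comm _ _
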